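/- Let d ≥ 1 and let A be a real symmetric d×d matrix whose smallest eigenvalue λ_min satisfies λ_min < 0 and whose largest eigenvalue λ_max satisfies 0 ≤ λ_max < 1. Then for every natural number J, ‖A(I − A)^J‖ ≤ (−λ_min)(1 − λ_min)^J + e/(J + 1), where I denotes the d×d identity matrix. -/

import Mathlib

open scoped Matrix.Norms.L2Operator

lemma key_ineq (x : ℝ) (hx0 : 0 ≤ x) (hx1 : x ≤ 1) (J : ℕ) :
    x * (1 - x) ^ J ≤ 1 / (J + 1) := by
  set y : ℝ := 1 - x with hy
  have hy0 : 0 ≤ y := by linarith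
  have hy1 : y ≤ 1 := by linarith
  have hsum : ((J : ℝ) + 1) * y ^ J ≤ ∑ k ∈ Finset.range (J + 1), y ^ k := by
    have : ∑ k ∈ Finset.range (J + 1), y ^ J ≤ ∑ k ∈ Finset.range (J + 1), y ^ k :=
      Finset.sum_le_sum fun k hk => pow_le_pow_of_le_one hy0 hy1
        (Nat.le_of_lt_succ (Finset.mem_range.mp hk))
    simpa [mul_comm] using this
  have hgeom : x * ∑ k ∈ Finset.range (J + 1), y ^ k = 1 - y ^ (J + 1) := by
    have h := geom_sum_mul y (J + 1)
    have hxy : x = -(y - 1) := by rw [hy]; ring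
    rw [hxy]
    nlinarith [h]
  have hpow : 0 ≤ y ^ (J + 1) := pow_nonneg hy0 _
  have h1 : ((J : ℝ) + 1) * (x * y ^ J) ≤ 1 := by
    have := mul_le_mul_of_nonneg_left hsum hx0
    nlinarith
  rw [le_div_iff₀ (by positivity)]
  linarith [h1]

lemma bound_aux (lammin : ℝ) (J : ℕ) (hminneg : lammin < 0) (x : ℝ)
    (hxmin : lammin ≤ x) (hx1 : x < 1) :
    |x * (1 - x) ^ J| ≤ (-lammin) * (1 - lammin) ^ J + Real.exp 1 / (J + 1) := by
  have hepos : (0 : ℝ) < Real.exp 1 / (J + 1) := by positivity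
  have h1pos : (0 : ℝ) < (-lammin) * (1 - lammin) ^ J :=
    mul_pos (by linarith) (pow_pos (by linarith) J)
  rcases le_or_gt x 0 with hxn | hxp
  · have habs : |x * (1 - x) ^ J| = (-x) * (1 - x) ^ J := by
      rw [abs_of_nonpos (mul_nonpos_of_nonpos_of_nonneg hxn (pow_nonneg (by linarith) J))]
      ring
    rw [habs]
    have h2 : (1 - x) ^ J ≤ (1 - lammin) ^ J :=
      pow_le_pow_left₀ (by linarith) (by linarith) J
    have h3 : (-x) * (1 - x) ^ J ≤ (-lammin) * (1 - lammin) ^ J :=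
      mul_le_mul (by linarith) h2 (pow_nonneg (by linarith) J) (by linarith)
    linarith
  · have hnn : 0 ≤ x * (1 - x) ^ J :=
      mul_nonneg hxp.le (pow_nonneg (by linarith) J)
    rw [abs_of_nonneg hnn]
    have hkey := key_ineq x hxp.le hx1.le J
    have h4 : (1 : ℝ) / (J + 1) ≤ Real.exp 1 / (J + 1) := by
      gcongr
      exact Real.one_le_exp zero_le_one
    linarith

lemma diag_norm_le {m : Type*} [Fintype m] [DecidableEq m] (v : m → ℝ) {c : ℝ}
    (hc : 0 ≤ c) (h : ∀ i, |v i| ≤ c) : ‖Matrix.diagonal v‖ ≤ c := by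
  rw [Matrix.cstar_norm_def]
  refine ContinuousLinearMap.opNorm_le_bound _ hc fun x => ?_
  set y : EuclideanSpace ℝ m := Matrix.toEuclideanCLM (𝕜 := ℝ) (Matrix.diagonal v) x with hy
  have hyi : ∀ i, y i = v i * x i := by
    intro i
    have h2 := congrFun (Matrix.ofLp_toEuclideanCLM (𝕜 := ℝ) (Matrix.diagonal v) x) i
    exact h2.trans (Matrix.mulVec_diagonal v _ i)
  rw [EuclideanSpace.norm_eq, EuclideanSpace.norm_eq]
  have hsum : ∑ i, ‖y i‖ ^ 2 ≤ ∑ i, c ^ 2 * ‖x i‖ ^ 2 := by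
    refine Finset.sum_le_sum fun i _ => ?_
    rw [hyi i, Real.norm_eq_abs, abs_mul]
    have h1 : |v i| * |x i| ≤ c * |x i| :=
      mul_le_mul_of_nonneg_right (h i) (abs_nonneg _)
    have h2 : (|v i| * |x i|) ^ 2 ≤ (c * |x i|) ^ 2 :=
      pow_le_pow_left₀ (by positivity) h1 2
    calc (|v i| * |x i|) ^ 2 ≤ (c * |x i|) ^ 2 := h2
      _ = c ^ 2 * ‖x i‖ ^ 2 := by rw [Real.norm_eq_abs]; ring
  calc Real.sqrt (∑ i, ‖y i‖ ^ 2)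
      ≤ Real.sqrt (∑ i, c ^ 2 * ‖x i‖ ^ 2) := Real.sqrt_le_sqrt hsum
    _ = c * Real.sqrt (∑ i, ‖x i‖ ^ 2) := by
        rw [← Finset.mul_sum, Real.sqrt_mul (sq_nonneg c), Real.sqrt_sq hc]

theorem stmt_0 {d : ℕ} (hd : 1 ≤ d) (A : Matrix (Fin d) (Fin d) ℝ)
    (hA : A.IsHermitian) (lammin lammax : ℝ)
    (hmin : IsLeast (Set.range hA.eigenvalues) lammin)
    (hmax : IsGreatest (Set.range hA.eigenvalues) lammax)
    (hminneg : lammin < 0) (hmaxnonneg : 0 ≤ lammax) (hmaxlt : lammax < 1)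
    (J : ℕ) :
    ‖(Matrix.toEuclideanCLM (𝕜 := ℝ) (n := Fin d) (A * (1 - A) ^ J) : EuclideanSpace ℝ (Fin d) →L[ℝ] EuclideanSpace ℝ (Fin d))‖ ≤
      (-lammin) * (1 - lammin) ^ J + Real.exp 1 / (J + 1) := by
  haveI : Nonempty (Fin d) := ⟨⟨0, hd⟩⟩
  rw [← Matrix.cstar_norm_def]
  set U : Matrix (Fin d) (Fin d) ℝ := (hA.eigenvectorUnitary : Matrix (Fin d) (Fin d) ℝ)
    with hUdef
  have hUmem : U ∈ unitary (Matrix (Fin d) (Fin d) ℝ) := hA.eigenvectorUnitary.2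
  have hU1 : U * star U = 1 := Unitary.mul_star_self_of_mem hUmem
  have hU2 : star U * U = 1 := Unitary.star_mul_self_of_mem hUmem
  set eig : Fin d → ℝ := hA.eigenvalues with heig
  have hA_eq : A = U * Matrix.diagonal eig * star U := by
    have h := hA.spectral_theorem
    simpa [hUdef, heig] using h
  have conj_mul : ∀ v w : Fin d → ℝ,
      (U * Matrix.diagonal v * star U) * (U * Matrix.diagonal w * star U)
        = U * Matrix.diagonal (fun i => v i * w i) * star U := by
    intro v w
    calc (U * Matrix.diagonal v * star U) * (U * Matrix.diagonal w * star U)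
        = U * (Matrix.diagonal v * ((star U * U) * (Matrix.diagonal w * star U))) := by
          simp only [mul_assoc]
      _ = U * Matrix.diagonal (fun i => v i * w i) * star U := by
          rw [hU2, one_mul,
            ← mul_assoc (Matrix.diagonal v) (Matrix.diagonal w) (star U),
            Matrix.diagonal_mul_diagonal, ← mul_assoc]
  have conj_pow : ∀ (v : Fin d → ℝ) (k : ℕ),
      (U * Matrix.diagonal v * star U) ^ k
        = U * Matrix.diagonal (fun i => v i ^ k) * star U := by
    intro v k
    induction k with
    | zero => simp [hU1]
    | succ k ih =>
        rw [pow_succ, ih, conj_mul]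
        simp [pow_succ]
  have h1A : (1 : Matrix (Fin d) (Fin d) ℝ) - A
      = U * Matrix.diagonal (fun i => 1 - eig i) * star U := by
    have hdiag : Matrix.diagonal (fun i : Fin d => 1 - eig i)
        = 1 - Matrix.diagonal eig := by
      rw [← Matrix.diagonal_one, ← Matrix.diagonal_sub]
    rw [hdiag, mul_sub, sub_mul, mul_one, hU1, ← hA_eq]
  have hfinal : A * (1 - A) ^ J
      = U * Matrix.diagonal (fun i => eig i * (1 - eig i) ^ J) * star U := by
    rw [h1A, conj_pow, hA_eq, conj_mul]
  rw [hfinal]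
  have hc0 : 0 ≤ (-lammin) * (1 - lammin) ^ J + Real.exp 1 / (J + 1) := by
    have h1pos : (0 : ℝ) < (-lammin) * (1 - lammin) ^ J :=
      mul_pos (by linarith) (pow_pos (by linarith) J)
    have : (0 : ℝ) < Real.exp 1 / (J + 1) := by positivity
    linarith
  have hdnorm : ‖Matrix.diagonal (fun i => eig i * (1 - eig i) ^ J)‖
      ≤ (-lammin) * (1 - lammin) ^ J + Real.exp 1 / (J + 1) := by
    refine diag_norm_le _ hc0 fun i => ?_
    have hxmin : lammin ≤ eig i := hmin.2 ⟨i, rfl⟩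
    have hxmax : eig i ≤ lammax := hmax.2 ⟨i, rfl⟩
    exact bound_aux lammin J hminneg (eig i) hxmin (lt_of_le_of_lt hxmax hmaxlt)
  calc ‖U * Matrix.diagonal (fun i => eig i * (1 - eig i) ^ J) * star U‖
      ≤ ‖U * Matrix.diagonal (fun i => eig i * (1 - eig i) ^ J)‖ * ‖star U‖ :=
        norm_mul_le _ _
    _ ≤ ‖U‖ * ‖Matrix.diagonal (fun i => eig i * (1 - eig i) ^ J)‖ * ‖star U‖ := by
        gcongr
        exact norm_mul_le _ _
    _ = ‖Matrix.diagonal (fun i => eig i * (1 - eig i) ^ J)‖ := by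
        rw [CStarRing.norm_of_mem_unitary hUmem,
          CStarRing.norm_of_mem_unitary (Unitary.star_mem hUmem), one_mul, mul_one]
    _ ≤ (-lammin) * (1 - lammin) ^ J + Real.exp 1 / (J + 1) := hdnorm
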